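/- Let λ denote Lebesgue measure on [0,1] and let U be a character on L^∞([0,1], λ; ℂ). Then there exists a decreasing sequence (A_n)_{n≥1} of measurable subsets of [0,1] with λ(A_n) → 0 such that U(1_{A_n}) = 1 for every n, where 1_{A_n} denotes the equivalence class of the indicator function of A_n in L^∞([0,1], λ; ℂ). -/

import Mathlib

open MeasureTheory Filter
open scoped ENNReal Topology

section aux

variable {α : Type*} {m : MeasurableSpace α} {μ : Measure α} {E : Type*} [NormedAddCommGroup E]

theorem myIndCongr {p : ℝ≥0∞} {s t : Set α} (h : s = t) (hs : MeasurableSet s)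
    (ht : MeasurableSet t) (hμs : μ s ≠ ⊤) (hμt : μ t ≠ ⊤) (c : E) :
    indicatorConstLp p hs hμs c = indicatorConstLp p ht hμt c := by
  subst h; rfl

end aux

theorem character_on_Linfty_unitInterval_countably_incomplete
    (U : Lp ℂ ∞ (volume : Measure ↥(Set.Icc (0:ℝ) 1)) →L[ℂ] ℂ)
    (hU1 : U (Lp.const ∞ (volume : Measure ↥(Set.Icc (0:ℝ) 1)) (1 : ℂ)) = 1)
    (hUmul : ∀ f g h : Lp ℂ ∞ (volume : Measure ↥(Set.Icc (0:ℝ) 1)),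
      (h : ↥(Set.Icc (0:ℝ) 1) →ₘ[volume] ℂ) =
        (f : ↥(Set.Icc (0:ℝ) 1) →ₘ[volume] ℂ) * (g : ↥(Set.Icc (0:ℝ) 1) →ₘ[volume] ℂ) →
        U h = U f * U g) :
    ∃ A : ℕ → Set ↥(Set.Icc (0:ℝ) 1),
      Antitone A ∧
      Tendsto (fun n => volume (A n)) atTop (𝓝 0) ∧
      ∀ n, ∃ hA : MeasurableSet (A n),
        U (indicatorConstLp ∞ hA (measure_ne_top volume (A n)) (1 : ℂ)) = 1 := by
  set I : Type := ↥(Set.Icc (0:ℝ) 1) with hI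
  -- multiplicativity on indicators
  have hmul : ∀ (s t : Set I) (hs : MeasurableSet s) (ht : MeasurableSet t),
      U (indicatorConstLp ∞ (hs.inter ht) (measure_ne_top volume _) (1 : ℂ)) =
        U (indicatorConstLp ∞ hs (measure_ne_top volume _) (1 : ℂ)) *
          U (indicatorConstLp ∞ ht (measure_ne_top volume _) (1 : ℂ)) := by
    intro s t hs ht
    refine hUmul _ _ _ ?_
    refine AEEqFun.ext ?_
    have h1 : ⇑((indicatorConstLp ∞ (hs.inter ht) (measure_ne_top volume _) (1 : ℂ) :
        Lp ℂ ∞ (volume : Measure I)) : I →ₘ[volume] ℂ) =ᵐ[volume]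
        (s ∩ t).indicator fun _ => (1:ℂ) := indicatorConstLp_coeFn
    have h2 : ⇑((indicatorConstLp ∞ hs (measure_ne_top volume _) (1 : ℂ) :
        Lp ℂ ∞ (volume : Measure I)) : I →ₘ[volume] ℂ) =ᵐ[volume]
        s.indicator fun _ => (1:ℂ) := indicatorConstLp_coeFn
    have h3 : ⇑((indicatorConstLp ∞ ht (measure_ne_top volume _) (1 : ℂ) :
        Lp ℂ ∞ (volume : Measure I)) : I →ₘ[volume] ℂ) =ᵐ[volume]
        t.indicator fun _ => (1:ℂ) := indicatorConstLp_coeFn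
    have h4 := AEEqFun.coeFn_mul
      ((indicatorConstLp ∞ hs (measure_ne_top volume _) (1 : ℂ) :
        Lp ℂ ∞ (volume : Measure I)) : I →ₘ[volume] ℂ)
      ((indicatorConstLp ∞ ht (measure_ne_top volume _) (1 : ℂ) :
        Lp ℂ ∞ (volume : Measure I)) : I →ₘ[volume] ℂ)
    filter_upwards [h1, h2, h3, h4] with x hx1 hx2 hx3 hx4
    rw [hx1, hx4]
    rw [Pi.mul_apply, hx2, hx3]
    by_cases hxs : x ∈ s <;> by_cases hxt : x ∈ t <;> simp [hxs, hxt]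
  -- helper: U of the indicator of any set, named by a measurability proof
  -- additivity on disjoint unions
  have hadd : ∀ (s t : Set I) (hs : MeasurableSet s) (ht : MeasurableSet t), Disjoint s t →
      U (indicatorConstLp ∞ (hs.union ht) (measure_ne_top volume _) (1 : ℂ)) =
        U (indicatorConstLp ∞ hs (measure_ne_top volume _) (1 : ℂ)) +
          U (indicatorConstLp ∞ ht (measure_ne_top volume _) (1 : ℂ)) := by
    intro s t hs ht hst
    rw [indicatorConstLp_disjoint_union hs ht (measure_ne_top volume _)
      (measure_ne_top volume _) hst (1:ℂ), map_add]
  -- splitting step: one of the two pieces has U-value 1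
  have hsplit : ∀ (A B : Set I) (hA : MeasurableSet A) (hB : MeasurableSet B),
      U (indicatorConstLp ∞ hA (measure_ne_top volume _) (1 : ℂ)) = 1 →
      (U (indicatorConstLp ∞ (hA.inter hB) (measure_ne_top volume _) (1 : ℂ)) = 1 ∨
       U (indicatorConstLp ∞ (hA.diff hB) (measure_ne_top volume _) (1 : ℂ)) = 1) := by
    intro A B hA hB hA1
    set x := U (indicatorConstLp ∞ (hA.inter hB) (measure_ne_top volume _) (1 : ℂ)) with hx
    set y := U (indicatorConstLp ∞ (hA.diff hB) (measure_ne_top volume _) (1 : ℂ)) with hy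
    have hxy : x + y = 1 := by
      rw [hx, hy, ← hadd _ _ (hA.inter hB) (hA.diff hB)
        (Set.disjoint_of_subset_left Set.inter_subset_right Set.disjoint_sdiff_right),
        myIndCongr (Set.inter_union_diff A B) _ hA _ (measure_ne_top volume _), hA1]
    have hxy0 : x * y = 0 := by
      have hinter : (A ∩ B) ∩ (A \ B) = (∅ : Set I) := by
        rw [Set.eq_empty_iff_forall_notMem]
        rintro z ⟨⟨_, hzB⟩, _, hzB'⟩
        exact hzB' hzB
      rw [hx, hy, ← hmul _ _ (hA.inter hB) (hA.diff hB),
        myIndCongr hinter _ MeasurableSet.empty _ (measure_ne_top volume _),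
        indicatorConstLp_empty, map_zero]
    rcases mul_eq_zero.mp hxy0 with h | h
    · right; rw [h, zero_add] at hxy; exact hxy
    · left; rw [h, add_zero] at hxy; exact hxy
  -- key recursive step
  have key : ∀ (n : ℕ) (A : Set I) (c : ℝ) (hA : MeasurableSet A),
      U (indicatorConstLp ∞ hA (measure_ne_top volume _) (1 : ℂ)) = 1 →
      A ⊆ Subtype.val ⁻¹' Set.Ico c (c + 2 * (1/2:ℝ)^n) →
      ∃ (B : Set I) (c' : ℝ) (hB : MeasurableSet B), B ⊆ A ∧
        U (indicatorConstLp ∞ hB (measure_ne_top volume _) (1 : ℂ)) = 1 ∧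
        B ⊆ Subtype.val ⁻¹' Set.Ico c' (c' + 2 * (1/2:ℝ)^(n+1)) := by
    intro n A c hA hA1 hsub
    set m : ℝ := c + (1/2:ℝ)^n with hm
    have hhalf : (2 : ℝ) * (1/2:ℝ)^(n+1) = (1/2:ℝ)^n := by
      rw [pow_succ]; ring
    have hS : MeasurableSet (Subtype.val ⁻¹' Set.Iio m : Set I) :=
      measurable_subtype_coe measurableSet_Iio
    rcases hsplit A _ hA hS hA1 with h | h
    · refine ⟨A ∩ Subtype.val ⁻¹' Set.Iio m, c, hA.inter hS, Set.inter_subset_left, h, ?_⟩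
      rintro z ⟨hzA, hzm⟩
      have := hsub hzA
      refine ⟨this.1, ?_⟩
      rw [hhalf]
      exact hzm
    · refine ⟨A \ Subtype.val ⁻¹' Set.Iio m, m, hA.diff hS, Set.diff_subset, h, ?_⟩
      rintro z ⟨hzA, hzm⟩
      have h2 := hsub hzA
      refine ⟨not_lt.mp hzm, ?_⟩
      have : (z : ℝ) < c + 2 * (1/2:ℝ)^n := h2.2
      rw [hhalf, hm]
      calc (z:ℝ) < c + 2 * (1/2:ℝ)^n := this
      _ = c + (1/2:ℝ)^n + (1/2:ℝ)^n := by ring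
  choose! B c' hB hBA hU2 hsub2 using key
  -- build the sequence
  set f : ℕ → Set I × ℝ := fun n =>
    Nat.rec ((Set.univ : Set I), (0:ℝ)) (fun n p => (B n p.1 p.2, c' n p.1 p.2)) n with hf
  have hf0 : f 0 = (Set.univ, 0) := rfl
  have hfs : ∀ n, f (n+1) = (B n (f n).1 (f n).2, c' n (f n).1 (f n).2) := fun n => rfl
  have inv : ∀ n, ∃ hA : MeasurableSet (f n).1,
      U (indicatorConstLp ∞ hA (measure_ne_top volume _) (1 : ℂ)) = 1 ∧
      (f n).1 ⊆ Subtype.val ⁻¹' Set.Ico (f n).2 ((f n).2 + 2 * (1/2:ℝ)^n) := by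
    intro n
    induction n with
    | zero =>
      refine ⟨MeasurableSet.univ, ?_, ?_⟩
      · rw [indicatorConstLp_univ]; exact hU1
      · simp only [hf0]
        intro z _
        constructor
        · simpa using z.2.1
        · have : (z:ℝ) ≤ 1 := z.2.2
          simp only [pow_zero]
          linarith
    | succ n ih =>
      obtain ⟨hA, h1, h2⟩ := ih
      exact ⟨hB n _ _ hA h1 h2, hU2 n _ _ hA h1 h2, hsub2 n _ _ hA h1 h2⟩
  refine ⟨fun n => (f n).1, ?_, ?_, ?_⟩
  · refine antitone_nat_of_succ_le fun n => ?_
    obtain ⟨hA, h1, h2⟩ := inv n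
    exact hBA n _ _ hA h1 h2
  · have hbound : ∀ n, volume ((f n).1) ≤ ENNReal.ofReal (2 * (1/2:ℝ)^n) := by
      intro n
      obtain ⟨hA, h1, h2⟩ := inv n
      calc volume ((f n).1)
          ≤ volume (Subtype.val ⁻¹' Set.Ico (f n).2 ((f n).2 + 2 * (1/2:ℝ)^n) : Set I) :=
            measure_mono h2
        _ = volume (Set.Ico (f n).2 ((f n).2 + 2 * (1/2:ℝ)^n) ∩ Set.Icc (0:ℝ) 1) :=
            volume_preimage_coe measurableSet_Icc.nullMeasurableSet measurableSet_Ico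
        _ ≤ volume (Set.Ico (f n).2 ((f n).2 + 2 * (1/2:ℝ)^n)) :=
            measure_mono Set.inter_subset_left
        _ = ENNReal.ofReal ((f n).2 + 2 * (1/2:ℝ)^n - (f n).2) := Real.volume_Ico
        _ = ENNReal.ofReal (2 * (1/2:ℝ)^n) := by ring_nf
    have hg : Tendsto (fun n => ENNReal.ofReal (2 * (1/2:ℝ)^n)) atTop (𝓝 0) := by
      have : Tendsto (fun n => (2:ℝ) * (1/2:ℝ)^n) atTop (𝓝 (2 * 0)) :=
        (tendsto_pow_atTop_nhds_zero_of_lt_one (by norm_num) (by norm_num)).const_mul 2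
      rw [mul_zero] at this
      have := (ENNReal.continuous_ofReal.tendsto 0).comp this
      rw [ENNReal.ofReal_zero] at this
      exact this
    exact tendsto_of_tendsto_of_tendsto_of_le_of_le tendsto_const_nhds hg
      (fun _ => bot_le) hbound
  · intro n
    obtain ⟨hA, h1, _⟩ := inv n
    exact ⟨hA, h1⟩
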